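/- Let d be the code distance of the polynomial remainder code with moduli m_1(x), …, m_L(x), set A = ⌊(d−1)/2⌋, let θ be an integer with 1 ≤ θ ≤ L − 2A, set B = ⌊(L−θ)/2⌋ − A, let η be a nonnegative integer with η < τ_{(θ)}, and assume A ≤ B. Let a(x), b(x) ∈ F[x] with deg(a) < deg(M) and deg(b) < deg(M), and let r ∈ F^{L·m} be a vector that differs from the coefficient stream s(a) by at most A bursts of width η and differs from the coefficient stream s(b) by at most A bursts of width η. Then a(x) = b(x). (When A ≤ B, the code corrects up to A bursts of width not more than η(θ).) -/

import Mathlib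

open Polynomial
open scoped Classical

/-- The code distance of the polynomial remainder code with moduli `m i`, `i ∈ s`. -/
noncomputable def codeDist {F : Type*} [Field F] {ι : Type*} (s : Finset ι)
    (m : ι → Polynomial F) : ℕ :=
  sInf {k | ∃ a : Polynomial F, a ≠ 0 ∧ a.degree < (s.lcm m).degree ∧
    (s.filter fun i => ¬ m i ∣ a).card = k}

/-- The `j`-th smallest element (1-indexed) of a multiset of natural numbers. -/
noncomputable def nthSmallest (s : Multiset ℕ) (j : ℕ) : ℕ :=
  (s.sort (· ≤ ·)).getD (j - 1) 0

/-- The coefficient stream of `c`: position `i·mdeg + j` (0-indexed) carries the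
coefficient of `x^j` in `[c]_{m_i}`, all moduli having degree `mdeg`. -/
noncomputable def stream {F : Type*} [Field F] {L : ℕ} (mdeg : ℕ)
    (m : Fin L → Polynomial F) (c : Polynomial F) (p : Fin (L * mdeg)) : F :=
  (c %ₘ m ⟨(p : ℕ) / mdeg,
    Nat.div_lt_of_lt_mul (lt_of_lt_of_le p.isLt (le_of_eq (Nat.mul_comm L mdeg)))⟩).coeff ((p : ℕ) % mdeg)

/-- `r` differs from `s` by at most `N` bursts of width `w`: the positions where
they differ are covered by at most `N` blocks of `w` consecutive positions. -/
def DiffBursts {F : Type*} {n : ℕ} (r s : Fin n → F) (N w : ℕ) : Prop :=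
  ∃ starts : Finset ℕ, starts.card ≤ N ∧
    ∀ p : Fin n, r p ≠ s p → ∃ t ∈ starts, t ≤ (p : ℕ) ∧ (p : ℕ) < t + w

lemma sorted_countP_getD (v : ℕ) :
    ∀ (l : List ℕ), l.Pairwise (· ≤ ·) → ∀ θ : ℕ, 1 ≤ θ →
      θ ≤ l.countP (fun x => decide (x < v)) → l.getD (θ - 1) 0 < v := by
  intro l
  induction l with
  | nil => intro _ θ h1 h2; simp at h2; omega
  | cons x xs ih =>
    intro hs θ h1 h2
    rw [List.pairwise_cons] at hs
    rw [List.countP_cons] at h2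
    by_cases hx : x < v
    · rcases Nat.eq_or_lt_of_le h1 with h | h
      · rw [← h]; simpa using hx
      · have hgd : (x :: xs).getD (θ - 1) 0 = xs.getD (θ - 1 - 1) 0 := by
          obtain ⟨k, rfl⟩ : ∃ k, θ = k + 2 := ⟨θ - 2, by omega⟩
          simp [List.getD_cons_succ]
        rw [hgd]
        have hc : θ - 1 ≤ xs.countP (fun x => decide (x < v)) := by
          simp [hx] at h2; omega
        exact ih hs.2 (θ - 1) (by omega) hc
    · exfalso
      have h0 : xs.countP (fun y => decide (y < v)) = 0 := by
        rw [List.countP_eq_zero]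
        intro y hy
        simp only [decide_eq_true_eq]
        exact fun hyv => hx (lt_of_le_of_lt (hs.1 y hy) hyv)
      simp [hx, h0] at h2
      omega

/-- when `A ≤ B`, the code corrects up to `A` bursts of width at most
`η(θ)`: any two polynomials of degree less than `deg M` whose coefficient streams
both differ from the received vector `r` by at most `A` bursts of width `η` are
equal. -/
theorem stmt12 {F : Type*} [Field F] {L : ℕ} (hL : 2 ≤ L)
    (m : Fin L → Polynomial F)
    (hmonic : ∀ i, (m i).Monic)
    (hdist : Function.Injective m)
    (hdeg : ∀ i, 0 < (m i).degree)
    (hm_lt : ∀ i, (m i).degree < (Finset.univ.lcm m).degree)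
    (mdeg : ℕ) (hmdeg : 1 ≤ mdeg)
    (hsamedeg : ∀ i, (m i).natDegree = mdeg)
    (d : ℕ) (hd : d = codeDist Finset.univ m)
    (A : ℕ) (hA : A = (d - 1) / 2)
    (θ : ℕ) (hθ1 : 1 ≤ θ) (hθ2 : θ ≤ L - 2 * A)
    (B : ℕ) (hB : B = (L - θ) / 2 - A)
    (tau : Fin L → ℕ)
    (htau : ∀ j, tau j = sInf {n | ∃ i, i ≠ j ∧ n = (gcd (m i) (m j)).natDegree})
    (η : ℕ)
    (hη : η < nthSmallest (Finset.univ.val.map tau) θ)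
    (hAB : A ≤ B)
    (a b : Polynomial F)
    (ha : a.degree < (Finset.univ.lcm m).degree)
    (hb : b.degree < (Finset.univ.lcm m).degree)
    (r : Fin (L * mdeg) → F)
    (hra : DiffBursts r (stream mdeg m a) A η)
    (hrb : DiffBursts r (stream mdeg m b) A η) :
    a = b := by
  by_contra hab
  have hc0 : a - b ≠ 0 := sub_ne_zero.mpr hab
  set c := a - b with hc
  set v := nthSmallest (Finset.univ.val.map tau) θ with hv
  have hm0 : ∀ i, m i ≠ 0 := fun i => (hmonic i).ne_zero
  have hdegm : ∀ i, (m i).degree = (mdeg : WithBot ℕ) := fun i => by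
    rw [Polynomial.degree_eq_natDegree (hm0 i), hsamedeg i]
  have hdegc : c.degree < (Finset.univ.lcm m).degree :=
    lt_of_le_of_lt (degree_sub_le a b) (max_lt ha hb)
  -- distance lower bound on the error count
  have hdle : d ≤ (Finset.univ.filter fun i => ¬ m i ∣ c).card := by
    rw [hd]; exact Nat.sInf_le ⟨c, hc0, hdegc, rfl⟩
  -- d ≥ 1
  have hd1 : 1 ≤ d := by
    rw [hd, codeDist, Nat.one_le_iff_ne_zero]
    intro h0
    rcases Nat.sInf_eq_zero.mp h0 with h | h
    · obtain ⟨a', ha'0, ha'deg, ha'card⟩ := h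
      have hdvdall : ∀ i ∈ Finset.univ, m i ∣ a' := by
        intro i _
        by_contra hnd
        have hmem : i ∈ Finset.univ.filter fun i => ¬ m i ∣ a' :=
          Finset.mem_filter.mpr ⟨Finset.mem_univ i, hnd⟩
        rw [Finset.card_eq_zero] at ha'card
        rw [ha'card] at hmem
        exact absurd hmem (Finset.notMem_empty i)
      exact absurd ha'deg
        (not_lt.mpr (Polynomial.degree_le_of_dvd (Finset.lcm_dvd hdvdall) ha'0))
    · exact Set.eq_empty_iff_forall_notMem.mp h _ ⟨c, hc0, hdegc, rfl⟩
  -- tau facts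
  have htau_le : ∀ j k : Fin L, j ≠ k → tau k ≤ (gcd (m j) (m k)).natDegree := by
    intro j k hjk
    rw [htau k]
    exact Nat.sInf_le ⟨j, hjk, rfl⟩
  have htau_mdeg : ∀ k : Fin L, tau k ≤ mdeg := by
    intro k
    obtain ⟨j, hjk⟩ : ∃ j : Fin L, j ≠ k :=
      Fintype.exists_ne_of_one_lt_card (by simp; omega) k
    calc tau k ≤ (gcd (m j) (m k)).natDegree := htau_le j k hjk
      _ ≤ (m k).natDegree := Polynomial.natDegree_le_of_dvd (gcd_dvd_right _ _) (hm0 k)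
      _ = mdeg := hsamedeg k
  have hvL : θ - 1 < ((Finset.univ.val.map tau).sort (· ≤ ·)).length := by
    rw [Multiset.length_sort]
    simp only [Multiset.card_map]
    have : (Finset.univ : Finset (Fin L)).val.card = L := by simp
    omega
  have hv_mem : ∃ k : Fin L, tau k = v := by
    have hmem : v ∈ (Finset.univ.val.map tau).sort (· ≤ ·) := by
      rw [hv, nthSmallest, List.getD_eq_getElem _ _ hvL]
      exact List.getElem_mem hvL
    obtain ⟨k, _, hk⟩ := Multiset.mem_map.mp ((Multiset.mem_sort _).mp hmem)
    exact ⟨k, hk⟩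
  have hηmdeg : η < mdeg := by
    obtain ⟨k, hk⟩ := hv_mem
    have := htau_mdeg k
    omega
  -- stream infrastructure
  have hplt : ∀ (j : Fin L) (q : ℕ), q < mdeg → (j : ℕ) * mdeg + q < L * mdeg := by
    intro j q hq
    calc (j:ℕ) * mdeg + q < ((j:ℕ) + 1) * mdeg := by rw [add_mul, one_mul]; omega
      _ ≤ L * mdeg := Nat.mul_le_mul_right _ j.isLt
  have hdivj : ∀ (j : Fin L) (q : ℕ), q < mdeg → ((j:ℕ) * mdeg + q) / mdeg = (j:ℕ) := by
    intro j q hq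
    rw [mul_comm, Nat.mul_add_div (by omega), Nat.div_eq_of_lt hq]
    simp
  have hstream_eq : ∀ (g : Polynomial F) (j : Fin L) (q : ℕ) (hq : q < mdeg),
      stream mdeg m g ⟨(j:ℕ) * mdeg + q, hplt j q hq⟩ = (g %ₘ m j).coeff q := by
    intro g j q hq
    have h2 : ((j:ℕ) * mdeg + q) % mdeg = q := by
      rw [mul_comm, Nat.mul_add_mod, Nat.mod_eq_of_lt hq]
    have h3 : (⟨((⟨(j:ℕ) * mdeg + q, hplt j q hq⟩ : Fin (L * mdeg)) : ℕ) / mdeg,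
        Nat.div_lt_of_lt_mul (lt_of_lt_of_le (⟨(j:ℕ) * mdeg + q, hplt j q hq⟩ : Fin (L * mdeg)).isLt
          (le_of_eq (Nat.mul_comm L mdeg)))⟩ : Fin L) = j := by
      apply Fin.ext
      exact hdivj j q hq
    rw [stream, h3]
    congr 1
  have hcmod : ∀ j : Fin L, c %ₘ m j = a %ₘ m j - b %ₘ m j := fun j => by
    rw [hc, Polynomial.sub_modByMonic]
  -- key divisibility lemma
  have hkey : ∀ j k : Fin L, j ≠ k → (c %ₘ m j) ≠ 0 →
      (c %ₘ m j).degree < (η : WithBot ℕ) → ¬ (tau k < v) → ¬ m k ∣ c := by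
    intro j k hjk hej hdegj hvk hdvd
    have hg0 : gcd (m j) (m k) ≠ 0 := fun h => hm0 j ((gcd_eq_zero_iff _ _).mp h).1
    have hτ : η < (gcd (m j) (m k)).natDegree := by
      have := htau_le j k hjk
      omega
    have hdeg2 : (c %ₘ m j).degree < (gcd (m j) (m k)).degree := by
      rw [Polynomial.degree_eq_natDegree hg0]
      exact lt_of_lt_of_le hdegj (by exact_mod_cast le_of_lt hτ)
    have hgc : gcd (m j) (m k) ∣ c %ₘ m j := by
      have h1 : gcd (m j) (m k) ∣ c := dvd_trans (gcd_dvd_right _ _) hdvd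
      have h2 : gcd (m j) (m k) ∣ m j * (c /ₘ m j) := Dvd.dvd.mul_right (gcd_dvd_left _ _) _
      have h3 : c %ₘ m j = c - m j * (c /ₘ m j) :=
        eq_sub_of_add_eq (Polynomial.modByMonic_add_div c (m j))
      rw [h3]; exact dvd_sub h1 h2
    exact hej (Polynomial.eq_zero_of_dvd_of_degree_lt hgc hdeg2)
  -- bursts
  obtain ⟨Sa, hSaA, hSa⟩ := hra
  obtain ⟨Sb, hSbA, hSb⟩ := hrb
  set St := Sa ∪ Sb with hSt
  have hcover : ∀ p : Fin (L * mdeg), stream mdeg m a p ≠ stream mdeg m b p →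
      ∃ t ∈ St, t ≤ (p:ℕ) ∧ (p:ℕ) < t + η := by
    intro p hp
    by_cases hrp : r p = stream mdeg m a p
    · obtain ⟨t, ht, h⟩ := hSb p (by rw [hrp]; exact hp)
      exact ⟨t, Finset.mem_union_right _ ht, h⟩
    · obtain ⟨t, ht, h⟩ := hSa p hrp
      exact ⟨t, Finset.mem_union_left _ ht, h⟩
  have hStcard : St.card ≤ 2 * A := le_trans (Finset.card_union_le _ _) (by omega)
  set N₁ := St.image (· / mdeg) with hN₁
  set N₂ := St.image (fun t => t / mdeg + 1) with hN₂
  set Err := Finset.univ.filter (fun i => ¬ m i ∣ c) with hErr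
  have hErr_mod : ∀ j : Fin L, j ∈ Err → c %ₘ m j ≠ 0 := by
    intro j hj
    rw [hErr, Finset.mem_filter] at hj
    intro h0
    exact hj.2 ((Polynomial.modByMonic_eq_zero_iff_dvd (hmonic j)).mp h0)
  -- coverage of error indices
  have hErrCover : ∀ j ∈ Err, (j:ℕ) ∈ N₁ ∪ N₂ := by
    intro j hj
    have hej : c %ₘ m j ≠ 0 := hErr_mod j hj
    have hdeglt : (c %ₘ m j).natDegree < mdeg := by
      rw [Polynomial.natDegree_lt_iff_degree_lt hej]
      rw [← hdegm j]
      exact Polynomial.degree_modByMonic_lt c (hmonic j)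
    set q := (c %ₘ m j).natDegree with hqdef
    have hqc : (c %ₘ m j).coeff q ≠ 0 := by
      rw [hqdef, Polynomial.coeff_natDegree]
      exact Polynomial.leadingCoeff_ne_zero.mpr hej
    have hdiff : stream mdeg m a ⟨(j:ℕ) * mdeg + q, hplt j _ hdeglt⟩
        ≠ stream mdeg m b ⟨(j:ℕ) * mdeg + q, hplt j _ hdeglt⟩ := by
      rw [hstream_eq a j _ hdeglt, hstream_eq b j _ hdeglt]
      intro h
      apply hqc
      rw [hcmod j, Polynomial.coeff_sub, h, sub_self]
    obtain ⟨t, htSt, ht1, ht2⟩ := hcover _ hdiff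
    simp only [Fin.val_mk] at ht1 ht2
    have hd1' : t / mdeg ≤ (j:ℕ) := by
      have := Nat.div_le_div_right (c := mdeg) ht1
      rwa [hdivj j _ hdeglt] at this
    have hd2' : (j:ℕ) ≤ t / mdeg + 1 := by
      have hple : (j:ℕ) * mdeg + (c %ₘ m j).natDegree ≤ t + mdeg := by omega
      have := Nat.div_le_div_right (c := mdeg) hple
      rwa [hdivj j _ hdeglt, Nat.add_div_right _ (by omega)] at this
    have hub : (j:ℕ) = t / mdeg ∨ (j:ℕ) = t / mdeg + 1 := by omega
    rcases hub with h | h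
    · exact Finset.mem_union_left _ (Finset.mem_image.mpr ⟨t, htSt, h.symm⟩)
    · exact Finset.mem_union_right _ (Finset.mem_image.mpr ⟨t, htSt, h.symm⟩)
  -- blocks not hit directly have small residue error
  have hsmall : ∀ j : Fin L, (j:ℕ) ∉ N₁ → (c %ₘ m j).degree < (η : WithBot ℕ) := by
    intro j hjN
    rw [Polynomial.degree_lt_iff_coeff_zero]
    intro q hq
    by_cases hqm : q < mdeg
    · have hseq : stream mdeg m a ⟨(j:ℕ) * mdeg + q, hplt j q hqm⟩
          = stream mdeg m b ⟨(j:ℕ) * mdeg + q, hplt j q hqm⟩ := by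
        by_contra hne
        obtain ⟨t, htSt, ht1, ht2⟩ := hcover _ hne
        simp only [Fin.val_mk] at ht1 ht2
        have hdj : t / mdeg ≠ (j:ℕ) := fun h => hjN (Finset.mem_image.mpr ⟨t, htSt, h⟩)
        have hle : t / mdeg ≤ (j:ℕ) := by
          have := Nat.div_le_div_right (c := mdeg) ht1
          rwa [hdivj j q hqm] at this
        have hlt : t / mdeg < (j:ℕ) := lt_of_le_of_ne hle hdj
        have htj : t < (j:ℕ) * mdeg := (Nat.div_lt_iff_lt_mul (by omega)).mp hlt
        omega
      rw [hstream_eq a j q hqm, hstream_eq b j q hqm] at hseq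
      rw [hcmod j, Polynomial.coeff_sub, hseq, sub_self]
    · rw [hcmod j, Polynomial.coeff_sub]
      have hza : (a %ₘ m j).coeff q = 0 :=
        Polynomial.coeff_eq_zero_of_degree_lt (lt_of_lt_of_le
          (lt_of_lt_of_le (Polynomial.degree_modByMonic_lt a (hmonic j)) (le_of_eq (hdegm j)))
          (by exact_mod_cast Nat.le_of_not_lt hqm))
      have hzb : (b %ₘ m j).coeff q = 0 :=
        Polynomial.coeff_eq_zero_of_degree_lt (lt_of_lt_of_le
          (lt_of_lt_of_le (Polynomial.degree_modByMonic_lt b (hmonic j)) (le_of_eq (hdegm j)))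
          (by exact_mod_cast Nat.le_of_not_lt hqm))
      rw [hza, hzb, sub_self]
  -- main case split
  by_cases hcase : ∀ j ∈ Err, (j:ℕ) ∈ N₁
  · have h1 : Err.card ≤ N₁.card :=
      Finset.card_le_card_of_injOn (fun j => (j:ℕ)) hcase
        (fun x _ y _ h => Fin.val_injective h)
    have h2 : N₁.card ≤ St.card := Finset.card_image_le
    omega
  · push_neg at hcase
    obtain ⟨j, hjErr, hjN⟩ := hcase
    have hej : c %ₘ m j ≠ 0 := hErr_mod j hjErr
    have hdegj := hsmall j hjN
    set W := Finset.univ.filter (fun k => tau k < v) with hWdef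
    have hWθ : W.card < θ := by
      by_contra hWc
      push_neg at hWc
      have e : ((Finset.univ.val.map tau).sort (· ≤ ·)).countP (fun x => decide (x < v))
          = W.card := by
        rw [← Multiset.coe_countP, Multiset.sort_eq, Multiset.countP_map]
        rfl
      have hgd := sorted_countP_getD v _ (Multiset.pairwise_sort _ _) θ hθ1 (by rw [e]; exact hWc)
      have hveq : v = ((Finset.univ.val.map tau).sort (· ≤ ·)).getD (θ - 1) 0 := hv
      rw [← hveq] at hgd
      exact lt_irrefl v hgd
    have hsub : ∀ k : Fin L, k ≠ j → ¬ (tau k < v) → k ∈ Err := by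
      intro k hkj hkv
      rw [hErr, Finset.mem_filter]
      exact ⟨Finset.mem_univ k, hkey j k (Ne.symm hkj) hej hdegj hkv⟩
    have hlow : L - W.card ≤ Err.card := by
      have hsubset : insert j ((Finset.univ \ W).erase j) ⊆ Err := by
        intro k hk
        rcases Finset.mem_insert.mp hk with rfl | hk
        · exact hjErr
        · have h1 := Finset.mem_erase.mp hk
          have h2 := Finset.mem_sdiff.mp h1.2
          refine hsub k h1.1 ?_
          intro hkv
          exact h2.2 (by rw [hWdef]; exact Finset.mem_filter.mpr ⟨Finset.mem_univ k, hkv⟩)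
      have h3 : (Finset.univ \ W).card = L - W.card := by
        rw [Finset.card_sdiff_of_subset (Finset.subset_univ W), Finset.card_univ, Fintype.card_fin]
      have h4 : (Finset.univ \ W).card - 1 ≤ ((Finset.univ \ W).erase j).card :=
        Finset.pred_card_le_card_erase
      have h5 : (insert j ((Finset.univ \ W).erase j)).card
          = ((Finset.univ \ W).erase j).card + 1 :=
        Finset.card_insert_of_notMem (fun h => (Finset.mem_erase.mp h).1 rfl)
      have h6 := Finset.card_le_card hsubset
      have h7 : W.card ≤ L := by
        have := Finset.card_le_card (Finset.subset_univ W)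
        rwa [Finset.card_univ, Fintype.card_fin] at this
      omega
    have hup : Err.card ≤ (N₁ ∪ N₂).card :=
      Finset.card_le_card_of_injOn (fun j => (j:ℕ)) hErrCover
        (fun x _ y _ h => Fin.val_injective h)
    have hup2 : (N₁ ∪ N₂).card ≤ 4 * A := by
      have h0 := Finset.card_union_le N₁ N₂
      have h1 : N₁.card ≤ St.card := Finset.card_image_le
      have h2 : N₂.card ≤ St.card := Finset.card_image_le
      omega
    omega
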